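/- (Savage) Suppose I(η, η̂) = η·I₁(η̂) + (1−η)·I₋₁(η̂) satisfies I(η, η̂) ≤ I(η, η) = J(η) for all η, η̂ ∈ (0,1), with equality iff η̂ = η, and I₁, I₋₁, J are differentiable. Then J is convex and I₁(η) = J(η) + (1−η)J′(η), I₋₁(η) = J(η) − η·J′(η). -/

import Mathlib

theorem savage_representation (I1 Im J : ℝ → ℝ)
    (hI1 : ∀ η ∈ Set.Ioo (0:ℝ) 1, DifferentiableAt ℝ I1 η)
    (hIm : ∀ η ∈ Set.Ioo (0:ℝ) 1, DifferentiableAt ℝ Im η)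
    (hJd : ∀ η ∈ Set.Ioo (0:ℝ) 1, DifferentiableAt ℝ J η)
    (hJ : ∀ η ∈ Set.Ioo (0:ℝ) 1, J η = η * I1 η + (1 - η) * Im η)
    (helicit : ∀ η ∈ Set.Ioo (0:ℝ) 1, ∀ ηhat ∈ Set.Ioo (0:ℝ) 1,
        η * I1 ηhat + (1 - η) * Im ηhat ≤ J η ∧
        (η * I1 ηhat + (1 - η) * Im ηhat = J η ↔ ηhat = η)) :
    ConvexOn ℝ (Set.Ioo (0:ℝ) 1) J ∧
      ∀ η ∈ Set.Ioo (0:ℝ) 1,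
        I1 η = J η + (1 - η) * deriv J η ∧ Im η = J η - η * deriv J η := by
  constructor
  · refine ⟨convex_Ioo 0 1, ?_⟩
    intro x hx y hy a b ha hb hab
    have hz : a • x + b • y ∈ Set.Ioo (0:ℝ) 1 := (convex_Ioo 0 1) hx hy ha hb hab
    have h1 := (helicit x hx _ hz).1
    have h2 := (helicit y hy _ hz).1
    have hJz := hJ _ hz
    simp only [smul_eq_mul] at *
    set z := a * x + b * y with hzdef
    calc J z = a * (x * I1 z + (1 - x) * Im z) + b * (y * I1 z + (1 - y) * Im z) := by
          rw [hJz]; linear_combination (-(Im z)) * hab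
      _ ≤ a * J x + b * J y :=
          add_le_add (mul_le_mul_of_nonneg_left h1 ha) (mul_le_mul_of_nonneg_left h2 hb)
  · intro η hη
    have hopen : Set.Ioo (0:ℝ) 1 ∈ nhds η := isOpen_Ioo.mem_nhds hη
    have h1 := (hI1 η hη).hasDerivAt
    have h2 := (hIm η hη).hasDerivAt
    have hmax : IsLocalMax (fun t => η * I1 t + (1 - η) * Im t) η := by
      have hfη : η * I1 η + (1 - η) * Im η = J η := (hJ η hη).symm
      filter_upwards [hopen] with t ht
      calc η * I1 t + (1 - η) * Im t ≤ J η := (helicit η hη t ht).1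
        _ = η * I1 η + (1 - η) * Im η := hfη.symm
    have hf : HasDerivAt (fun t => η * I1 t + (1 - η) * Im t)
        (η * deriv I1 η + (1 - η) * deriv Im η) η :=
      (h1.const_mul η).add (h2.const_mul (1 - η))
    have hc : η * deriv I1 η + (1 - η) * deriv Im η = 0 := by
      rw [← hf.deriv]; exact hmax.deriv_eq_zero
    have hg : HasDerivAt (fun t => t * I1 t + (1 - t) * Im t)
        (I1 η + η * deriv I1 η + (-(Im η) + (1 - η) * deriv Im η)) η := by
      have := ((hasDerivAt_id η).mul h1).add
        (((hasDerivAt_const η (1:ℝ)).sub (hasDerivAt_id η)).mul h2)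
      refine (this.congr_deriv ?_).congr_of_eventuallyEq (Filter.Eventually.of_forall fun t => ?_)
      · simp only [Pi.mul_apply, Pi.sub_apply, id_eq]; ring
      · simp only [Pi.add_apply, Pi.mul_apply, Pi.sub_apply, id_eq]
    have hJ' : deriv J η = I1 η - Im η := by
      have heq : deriv J η = deriv (fun t => t * I1 t + (1 - t) * Im t) η := by
        apply Filter.EventuallyEq.deriv_eq
        filter_upwards [hopen] with t ht using hJ t ht
      rw [heq, hg.deriv]
      linarith
    constructor
    · rw [hJ', hJ η hη]; ring
    · rw [hJ', hJ η hη]; ring
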